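/- Let G be a finite connected simple graph, κ_0 ∈ ℝ, and suppose x_0, x_1, …, x_k is a geodesic path (d(x_0,x_k) = k and consecutive vertices adjacent). With I_{κ_0} = ∑_{xy∈E} max{0, κ_0 − κ_LLY(x,y)}, we have κ_LLY(x_0,x_k) ≥ (∑_{i=1}^k κ_LLY(x_{i-1},x_i))/k ≥ κ_0 − I_{κ_0}/k. -/

import Mathlib

open Finset

/-- A probability measure on a finite set, given as a density. -/
def IsProbMeasure {V : Type*} [Fintype V] (m : V → ℝ) : Prop :=
  (∀ x, 0 ≤ m x) ∧ ∑ x, m x = 1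

/-- A coupling between two probability measures on a finite set. -/
def IsCoupling {V : Type*} [Fintype V] (A : V × V → ℝ) (m₁ m₂ : V → ℝ) : Prop :=
  (∀ p, 0 ≤ A p) ∧ (∀ x, ∑ y, A (x, y) = m₁ x) ∧ (∀ y, ∑ x, A (x, y) = m₂ y)

/-- The Wasserstein-1 (transportation) distance between two probability measures on a
finite set, with respect to a cost `d`. -/
noncomputable def W {V : Type*} [Fintype V] (d : V → V → ℝ) (m₁ m₂ : V → ℝ) : ℝ :=
  sInf {c | ∃ A, IsCoupling A m₁ m₂ ∧ c = ∑ p : V × V, A p * d p.1 p.2}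

lemma W_symm {V : Type*} [Fintype V] (d : V → V → ℝ) (hd : ∀ x y, d x y = d y x)
    (m₁ m₂ : V → ℝ) : W d m₁ m₂ = W d m₂ m₁ := by
  have key : ∀ m₁ m₂ : V → ℝ,
      {c | ∃ A, IsCoupling A m₁ m₂ ∧ c = ∑ p : V × V, A p * d p.1 p.2} ⊆
      {c | ∃ A, IsCoupling A m₂ m₁ ∧ c = ∑ p : V × V, A p * d p.1 p.2} := by
    rintro m₁ m₂ c ⟨A, ⟨h0, h1, h2⟩, rfl⟩
    refine ⟨fun p => A (p.2, p.1), ⟨fun p => h0 _, fun x => h2 x, fun y => h1 y⟩, ?_⟩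
    refine Fintype.sum_equiv (Equiv.prodComm V V) _ _ ?_
    intro p
    simp [Equiv.prodComm, hd p.1 p.2]
  unfold W
  congr 1
  exact Set.Subset.antisymm (key m₁ m₂) (key m₂ m₁)

/-- The `α`-lazy random walk measure at a vertex `x` of a graph. -/
noncomputable def lazyWalk {V : Type*} [Fintype V] [DecidableEq V] (G : SimpleGraph V)
    [DecidableRel G.Adj] (α : ℝ) (x : V) : V → ℝ :=
  fun v => if v = x then α else if G.Adj x v then (1 - α) / (G.degree x) else 0

/-- The `α`-Ricci curvature `κ_α(x,y) = 1 - W(m_x^α, m_y^α)/d(x,y)`. -/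
noncomputable def kappaAlpha {V : Type*} [Fintype V] [DecidableEq V] (G : SimpleGraph V)
    [DecidableRel G.Adj] (α : ℝ) (x y : V) : ℝ :=
  1 - W (fun a b => (G.dist a b : ℝ)) (lazyWalk G α x) (lazyWalk G α y) / (G.dist x y)

lemma kappaAlpha_symm {V : Type*} [Fintype V] [DecidableEq V] (G : SimpleGraph V)
    [DecidableRel G.Adj] (α : ℝ) (x y : V) :
    kappaAlpha G α x y = kappaAlpha G α y x := by
  unfold kappaAlpha
  rw [W_symm _ (fun a b => by rw [SimpleGraph.dist_comm]),
    SimpleGraph.dist_comm]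

/-- The Lin–Lu–Yau Ricci curvature `κ_LLY(x,y) = lim_{α → 1⁻} κ_α(x,y)/(1-α)`. -/
noncomputable def kappaLLY {V : Type*} [Fintype V] [DecidableEq V] (G : SimpleGraph V)
    [DecidableRel G.Adj] (x y : V) : ℝ :=
  Filter.limUnder (nhdsWithin 1 (Set.Ico (0:ℝ) 1)) (fun α => kappaAlpha G α x y / (1 - α))

lemma kappaLLY_symm {V : Type*} [Fintype V] [DecidableEq V] (G : SimpleGraph V)
    [DecidableRel G.Adj] (x y : V) : kappaLLY G x y = kappaLLY G y x := by
  unfold kappaLLY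
  congr 1
  funext α
  rw [kappaAlpha_symm]

/-- Integral `α`-Ricci curvature `I^α_{κ₀}`: total amount of `α`-Ricci curvature below the
threshold `(1-α)κ₀`, summed over the edges of `G`. -/
noncomputable def IAlpha {V : Type*} [Fintype V] [DecidableEq V] (G : SimpleGraph V)
    [DecidableRel G.Adj] (α κ₀ : ℝ) : ℝ :=
  ∑ e ∈ G.edgeFinset,
    Sym2.lift ⟨fun x y => max 0 ((1 - α) * κ₀ - kappaAlpha G α x y),
      fun x y => by simp only []; rw [kappaAlpha_symm]⟩ e

/-- Integral Lin–Lu–Yau Ricci curvature `I_{κ₀}`: total amount of Lin–Lu–Yau Ricci curvature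
below the threshold `κ₀`, summed over the edges of `G`. -/
noncomputable def ILLY {V : Type*} [Fintype V] [DecidableEq V] (G : SimpleGraph V)
    [DecidableRel G.Adj] (κ₀ : ℝ) : ℝ :=
  ∑ e ∈ G.edgeFinset,
    Sym2.lift ⟨fun x y => max 0 (κ₀ - kappaLLY G x y),
      fun x y => by simp only []; rw [kappaLLY_symm]⟩ e

/-- The diameter of a finite graph. -/
noncomputable def gDiam {V : Type*} [Fintype V] (G : SimpleGraph V) : ℕ :=
  Finset.univ.sup fun p : V × V => G.dist p.1 p.2

section Waux
variable {V : Type*} [Fintype V] {d : V → V → ℝ} {m₁ m₂ m₃ : V → ℝ}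

lemma isCoupling_prod (h₁ : IsProbMeasure m₁) (h₂ : IsProbMeasure m₂) :
    IsCoupling (fun p : V × V => m₁ p.1 * m₂ p.2) m₁ m₂ := by
  refine ⟨fun p => mul_nonneg (h₁.1 _) (h₂.1 _), fun x => ?_, fun y => ?_⟩
  · dsimp only; rw [← Finset.mul_sum, h₂.2, mul_one]
  · dsimp only; rw [← Finset.sum_mul, h₁.2, one_mul]

lemma WSet_nonempty (h₁ : IsProbMeasure m₁) (h₂ : IsProbMeasure m₂) (d : V → V → ℝ) :
    Set.Nonempty {c | ∃ A, IsCoupling A m₁ m₂ ∧ c = ∑ p : V × V, A p * d p.1 p.2} :=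
  ⟨_, _, isCoupling_prod h₁ h₂, rfl⟩

lemma WSet_bddBelow (hd : ∀ a b, 0 ≤ d a b) :
    BddBelow {c | ∃ A, IsCoupling A m₁ m₂ ∧ c = ∑ p : V × V, A p * d p.1 p.2} := by
  refine ⟨0, ?_⟩
  rintro c ⟨A, hA, rfl⟩
  exact Finset.sum_nonneg fun p _ => mul_nonneg (hA.1 p) (hd _ _)

lemma W_le_cost (hd : ∀ a b, 0 ≤ d a b) {A} (hA : IsCoupling A m₁ m₂) :
    W d m₁ m₂ ≤ ∑ p : V × V, A p * d p.1 p.2 :=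
  csInf_le (WSet_bddBelow hd) ⟨A, hA, rfl⟩

lemma le_W (h₁ : IsProbMeasure m₁) (h₂ : IsProbMeasure m₂) {r : ℝ}
    (hr : ∀ A, IsCoupling A m₁ m₂ → r ≤ ∑ p : V × V, A p * d p.1 p.2) : r ≤ W d m₁ m₂ :=
  le_csInf (WSet_nonempty h₁ h₂ d) (by rintro c ⟨A, hA, rfl⟩; exact hr A hA)

lemma sum_coupling_fst {A : V × V → ℝ} (hA : IsCoupling A m₁ m₂) (g : V → ℝ) :
    ∑ p : V × V, A p * g p.1 = ∑ x, m₁ x * g x := by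
  rw [Fintype.sum_prod_type]
  exact Finset.sum_congr rfl fun x _ => by dsimp only; rw [← Finset.sum_mul, hA.2.1]

lemma sum_coupling_snd {A : V × V → ℝ} (hA : IsCoupling A m₁ m₂) (g : V → ℝ) :
    ∑ p : V × V, A p * g p.2 = ∑ y, m₂ y * g y := by
  rw [Fintype.sum_prod_type_right]
  exact Finset.sum_congr rfl fun y _ => by dsimp only; rw [← Finset.sum_mul, hA.2.2]

lemma dual_le_W (h₁ : IsProbMeasure m₁) (h₂ : IsProbMeasure m₂) (f : V → ℝ)
    (hf : ∀ a b, f b - f a ≤ d a b) :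
    (∑ y, m₂ y * f y) - (∑ x, m₁ x * f x) ≤ W d m₁ m₂ := by
  refine le_W h₁ h₂ fun A hA => ?_
  rw [← sum_coupling_snd hA f, ← sum_coupling_fst hA f, ← Finset.sum_sub_distrib]
  refine Finset.sum_le_sum fun p _ => ?_
  rw [← mul_sub]
  exact mul_le_mul_of_nonneg_left (hf _ _) (hA.1 p)

lemma W_self_nonpos [DecidableEq V] (hd : ∀ a b, 0 ≤ d a b) (hd0 : ∀ a, d a a = 0) (h₁ : IsProbMeasure m₁) :
    W d m₁ m₁ ≤ 0 := by
  have hA : IsCoupling (fun p : V × V => if p.1 = p.2 then m₁ p.1 else 0) m₁ m₁ := by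
    refine ⟨fun p => by dsimp only; split <;> simp [h₁.1], fun x => ?_, fun y => ?_⟩
    · simpa using Finset.sum_ite_eq (Finset.univ) x (fun _ => m₁ x)
    · have : ∀ x, (if x = y then m₁ x else 0) = (if x = y then m₁ y else 0) := by
        intro x; split <;> simp_all
      simp only [this]
      simpa using Finset.sum_ite_eq' (Finset.univ) y (fun _ => m₁ y)
  refine le_trans (W_le_cost hd hA) (le_of_eq ?_)
  refine Finset.sum_eq_zero fun p _ => ?_
  split
  · rename_i h; rw [h, hd0, mul_zero]
  · rw [zero_mul]

lemma W_triangle (hd : ∀ a b, 0 ≤ d a b) (htri : ∀ a b c, d a c ≤ d a b + d b c)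
    (h₁ : IsProbMeasure m₁) (h₂ : IsProbMeasure m₂) (h₃ : IsProbMeasure m₃) :
    W d m₁ m₃ ≤ W d m₁ m₂ + W d m₂ m₃ := by
  have key : ∀ A B, IsCoupling A m₁ m₂ → IsCoupling B m₂ m₃ →
      W d m₁ m₃ ≤ (∑ p : V × V, A p * d p.1 p.2) + (∑ p : V × V, B p * d p.1 p.2) := by
    intro A B hA hB
    set t : V → V → V → ℝ := fun x y z => if m₂ y = 0 then 0 else A (x, y) * B (y, z) / m₂ y
      with ht
    have hA0 : ∀ x y, m₂ y = 0 → A (x, y) = 0 := by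
      intro x y h
      have := (Finset.sum_eq_zero_iff_of_nonneg (fun i _ => hA.1 (i, y))).mp
        ((hA.2.2 y).trans h) x (Finset.mem_univ x)
      exact this
    have hB0 : ∀ y z, m₂ y = 0 → B (y, z) = 0 := by
      intro y z h
      exact (Finset.sum_eq_zero_iff_of_nonneg (fun i _ => hB.1 (y, i))).mp
        ((hB.2.1 y).trans h) z (Finset.mem_univ z)
    have htnn : ∀ x y z, 0 ≤ t x y z := by
      intro x y z; rw [ht]; dsimp only; split
      · exact le_rfl
      · exact div_nonneg (mul_nonneg (hA.1 _) (hB.1 _)) (h₂.1 y)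
    have hsumz : ∀ x y, ∑ z, t x y z = A (x, y) := by
      intro x y
      by_cases h : m₂ y = 0
      · simp [ht, h, hA0 x y h]
      · rw [ht]; dsimp only
        simp only [if_neg h]
        rw [← Finset.sum_div, ← Finset.mul_sum, hB.2.1, mul_div_assoc, div_self h, mul_one]
    have hsumx : ∀ y z, ∑ x, t x y z = B (y, z) := by
      intro y z
      by_cases h : m₂ y = 0
      · simp [ht, h, hB0 y z h]
      · rw [ht]; dsimp only
        simp only [if_neg h]
        rw [← Finset.sum_div, ← Finset.sum_mul, hA.2.2, mul_comm, mul_div_assoc, div_self h,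
          mul_one]
    have hC : IsCoupling (fun p : V × V => ∑ y, t p.1 y p.2) m₁ m₃ := by
      refine ⟨fun p => Finset.sum_nonneg fun y _ => htnn _ _ _, fun x => ?_, fun z => ?_⟩
      · rw [Finset.sum_comm]
        calc ∑ y, ∑ z, t x y z = ∑ y, A (x, y) := by
              exact Finset.sum_congr rfl fun y _ => hsumz x y
          _ = m₁ x := hA.2.1 x
      · calc ∑ x, ∑ y, t x y z = ∑ y, ∑ x, t x y z := Finset.sum_comm
          _ = ∑ y, B (y, z) := Finset.sum_congr rfl fun y _ => hsumx y z
          _ = m₃ z := hB.2.2 z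
    refine le_trans (W_le_cost hd hC) ?_
    have expand : ∑ p : V × V, (∑ y, t p.1 y p.2) * d p.1 p.2
        = ∑ x, ∑ z, ∑ y, t x y z * d x z := by
      rw [Fintype.sum_prod_type]
      exact Finset.sum_congr rfl fun x _ => Finset.sum_congr rfl fun z _ =>
        Finset.sum_mul _ _ _
    rw [expand]
    have step : ∑ x, ∑ z, ∑ y, t x y z * d x z
        ≤ ∑ x, ∑ z, ∑ y, t x y z * (d x y + d y z) := by
      refine Finset.sum_le_sum fun x _ => Finset.sum_le_sum fun z _ =>
        Finset.sum_le_sum fun y _ => ?_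
      exact mul_le_mul_of_nonneg_left (htri x y z) (htnn x y z)
    refine le_trans step (le_of_eq ?_)
    have split : ∑ x, ∑ z, ∑ y, t x y z * (d x y + d y z)
        = (∑ x, ∑ y, (∑ z, t x y z) * d x y) + (∑ y, ∑ z, (∑ x, t x y z) * d y z) := by
      simp only [mul_add, Finset.sum_add_distrib, Finset.sum_mul]
      congr 1
      · rw [Finset.sum_congr rfl fun x _ => Finset.sum_comm]
      · calc ∑ x, ∑ z, ∑ y, t x y z * d y z
            = ∑ x, ∑ y, ∑ z, t x y z * d y z :=
              Finset.sum_congr rfl fun x _ => Finset.sum_comm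
          _ = ∑ y, ∑ x, ∑ z, t x y z * d y z := Finset.sum_comm
          _ = ∑ y, ∑ z, ∑ x, t x y z * d y z :=
              Finset.sum_congr rfl fun y _ => Finset.sum_comm
    rw [split]
    congr 1
    · rw [Fintype.sum_prod_type]
      exact Finset.sum_congr rfl fun x _ => Finset.sum_congr rfl fun y _ => by
        rw [hsumz]
    · rw [Fintype.sum_prod_type]
      exact Finset.sum_congr rfl fun y _ => Finset.sum_congr rfl fun z _ => by
        rw [hsumx]
  have h23ne := WSet_nonempty h₂ h₃ d
  have h12ne := WSet_nonempty h₁ h₂ d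
  have step1 : W d m₁ m₃ - W d m₁ m₂ ≤ W d m₂ m₃ := by
    refine le_csInf h23ne ?_
    rintro c₂ ⟨B, hB, rfl⟩
    rw [sub_le_iff_le_add]
    rw [← sub_le_iff_le_add']
    refine le_csInf h12ne ?_
    rintro c₁ ⟨A, hA, rfl⟩
    rw [sub_le_iff_le_add]
    exact key A B hA hB
  linarith

end Waux

section Graph
variable {V : Type*} [Fintype V] [DecidableEq V] (G : SimpleGraph V) [DecidableRel G.Adj]

lemma lazyWalk_split (α : ℝ) (x v : V) :
    lazyWalk G α x v
      = (if v = x then α else 0) + (if G.Adj x v then (1 - α) / (G.degree x) else 0) := by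
  unfold lazyWalk
  by_cases h : v = x
  · simp [h]
  · simp [h]

lemma lazyWalk_exp (α : ℝ) (x : V) (g : V → ℝ) :
    ∑ v, lazyWalk G α x v * g v
      = α * g x + ∑ v ∈ G.neighborFinset x, (1 - α) / (G.degree x) * g v := by
  have : ∀ v, lazyWalk G α x v * g v
      = (if v = x then α * g v else 0) + (if G.Adj x v then (1 - α) / (G.degree x) * g v else 0) := by
    intro v
    rw [lazyWalk_split, add_mul]
    congr 1 <;> split <;> simp
  simp only [this]
  rw [Finset.sum_add_distrib]
  congr 1
  · simpa using Finset.sum_ite_eq' Finset.univ x (fun v => α * g v)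
  · rw [SimpleGraph.neighborFinset_eq_filter, Finset.sum_filter]

lemma lazyWalk_isProb {α : ℝ} (hα0 : 0 ≤ α) (hα1 : α ≤ 1) {x : V} (hdeg : 0 < G.degree x) :
    IsProbMeasure (lazyWalk G α x) := by
  constructor
  · intro v
    unfold lazyWalk
    split
    · exact hα0
    split
    · exact div_nonneg (by linarith) (Nat.cast_nonneg _)
    · exact le_rfl
  · have := lazyWalk_exp G α x (fun _ => 1)
    simp only [mul_one] at this
    rw [this, Finset.sum_const, SimpleGraph.card_neighborFinset_eq_degree, nsmul_eq_mul]
    field_simp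
    ring

lemma dist_cast_triangle (hG : G.Connected) (a b c : V) :
    (G.dist a c : ℝ) ≤ (G.dist a b : ℝ) + (G.dist b c : ℝ) := by
  exact_mod_cast hG.dist_triangle

/-- `κ_α(x,y)/(1-α) ≤ 2` for `α ∈ [0,1)`. -/
lemma kappa_div_le_two (hG : G.Connected) (hdeg : ∀ v, 0 < G.degree v) {x y : V} (hxy : x ≠ y)
    {α : ℝ} (hα0 : 0 ≤ α) (hα1 : α < 1) :
    kappaAlpha G α x y / (1 - α) ≤ 2 := by
  have h1α : (0:ℝ) < 1 - α := by linarith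
  set D : ℝ := (G.dist x y : ℝ) with hD
  have hD1 : 1 ≤ D := by
    have : 1 ≤ G.dist x y := hG.pos_dist_of_ne hxy
    rw [hD]
    exact_mod_cast this
  have hD0 : (0:ℝ) < D := by linarith
  set f : V → ℝ := fun v => (G.dist x v : ℝ) with hf
  have hlip : ∀ a b, f b - f a ≤ (G.dist a b : ℝ) := by
    intro a b
    rw [sub_le_iff_le_add, add_comm]
    have := hG.dist_triangle (u := x) (v := a) (w := b)
    simp only [hf]
    exact_mod_cast this
  have hmx : IsProbMeasure (lazyWalk G α x) := lazyWalk_isProb G hα0 hα1.le (hdeg x)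
  have hmy : IsProbMeasure (lazyWalk G α y) := lazyWalk_isProb G hα0 hα1.le (hdeg y)
  have hEx : ∑ v, lazyWalk G α x v * f v = 1 - α := by
    rw [lazyWalk_exp]
    have h0 : f x = 0 := by simp [hf]
    have h1 : ∀ v ∈ G.neighborFinset x, (1 - α) / (G.degree x) * f v
        = (1 - α) / (G.degree x) := by
      intro v hv
      rw [SimpleGraph.mem_neighborFinset] at hv
      have : f v = 1 := by
        simp only [hf]
        exact_mod_cast (SimpleGraph.dist_eq_one_iff_adj.mpr hv)
      rw [this, mul_one]
    rw [h0, mul_zero, zero_add, Finset.sum_congr rfl h1, Finset.sum_const,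
      SimpleGraph.card_neighborFinset_eq_degree, nsmul_eq_mul]
    have hne : (G.degree x : ℝ) ≠ 0 := by
      have := hdeg x; positivity
    field_simp
  have hEy : α * D + (1 - α) * (D - 1) ≤ ∑ v, lazyWalk G α y v * f v := by
    rw [lazyWalk_exp]
    have h0 : f y = D := by simp [hf, hD]
    rw [h0]
    have h1 : ∀ v ∈ G.neighborFinset y, (1 - α) / (G.degree y) * (D - 1)
        ≤ (1 - α) / (G.degree y) * f v := by
      intro v hv
      rw [SimpleGraph.mem_neighborFinset] at hv
      refine mul_le_mul_of_nonneg_left ?_ (by positivity)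
      have hd1 : G.dist v y = 1 := SimpleGraph.dist_eq_one_iff_adj.mpr hv.symm
      have htr := hG.dist_triangle (u := x) (v := v) (w := y)
      rw [hd1] at htr
      have : (G.dist x y : ℝ) ≤ (G.dist x v : ℝ) + 1 := by exact_mod_cast htr
      simp only [hf]
      linarith
    have h2 := Finset.sum_le_sum h1
    rw [Finset.sum_const, SimpleGraph.card_neighborFinset_eq_degree, nsmul_eq_mul] at h2
    have hdegy : (0:ℝ) < (G.degree y : ℝ) := by exact_mod_cast hdeg y
    have : (G.degree y : ℝ) * ((1 - α) / (G.degree y) * (D - 1)) = (1 - α) * (D - 1) := by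
      field_simp
    rw [this] at h2
    linarith
  have hWlb : D - 2 * (1 - α) ≤ W (fun a b => (G.dist a b : ℝ)) (lazyWalk G α x) (lazyWalk G α y) := by
    have := dual_le_W (d := fun a b => (G.dist a b : ℝ)) hmx hmy f hlip
    calc D - 2 * (1 - α) ≤ (α * D + (1 - α) * (D - 1)) - (1 - α) := by ring_nf; nlinarith
      _ ≤ (∑ v, lazyWalk G α y v * f v) - (∑ v, lazyWalk G α x v * f v) := by
          rw [hEx]; linarith
      _ ≤ _ := this
  unfold kappaAlpha
  rw [div_le_iff₀ h1α, ← hD]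
  have : W (fun a b => (G.dist a b : ℝ)) (lazyWalk G α x) (lazyWalk G α y) / D
      ≥ (D - 2 * (1 - α)) / D := by gcongr
  have hdd : (D - 2 * (1 - α)) / D = 1 - 2 * (1 - α) / D := by field_simp
  rw [hdd] at this
  have h2D : 2 * (1 - α) / D ≤ 2 * (1 - α) := by
    rw [div_le_iff₀ hD0]
    nlinarith
  linarith
end Graph

section Mono
variable {V : Type*} [Fintype V] [DecidableEq V] (G : SimpleGraph V) [DecidableRel G.Adj]

lemma lazyWalk_decomp {α β : ℝ} (hα1 : α < 1) (hαβ : α ≤ β) (z v : V) :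
    lazyWalk G β z v = (β - α) / (1 - α) * (if v = z then 1 else 0)
      + (1 - (β - α) / (1 - α)) * lazyWalk G α z v := by
  have h1α : (0:ℝ) < 1 - α := by linarith
  have hlamA : 1 - (β - α) / (1 - α) = (1 - β) / (1 - α) := by
    field_simp
    ring
  unfold lazyWalk
  by_cases h : v = z
  · rw [if_pos h, if_pos h, if_pos h, hlamA]
    field_simp
    ring
  · rw [if_neg h, if_neg h, if_neg h, mul_zero, zero_add, hlamA]
    by_cases h2 : G.Adj z v
    · rw [if_pos h2, if_pos h2]
      field_simp
    · rw [if_neg h2, if_neg h2, mul_zero]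

lemma kappa_div_monotoneOn (hG : G.Connected) (hdeg : ∀ v, 0 < G.degree v) {x y : V}
    (hxy : x ≠ y) :
    MonotoneOn (fun α => kappaAlpha G α x y / (1 - α)) (Set.Ioo (0:ℝ) 1) := by
  rintro α ⟨hα0, hα1⟩ β ⟨hβ0, hβ1⟩ hαβ
  dsimp only
  set dfun : V → V → ℝ := fun a b => (G.dist a b : ℝ) with hdfun
  have hd0 : ∀ a b, 0 ≤ dfun a b := fun a b => Nat.cast_nonneg _
  set D : ℝ := (G.dist x y : ℝ) with hD
  have hD1 : 1 ≤ D := by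
    have : 1 ≤ G.dist x y := hG.pos_dist_of_ne hxy
    rw [hD]; exact_mod_cast this
  have hD0 : (0:ℝ) < D := by linarith
  set lam : ℝ := (β - α) / (1 - α) with hlam
  have h1α : (0:ℝ) < 1 - α := by linarith
  have h1β : (0:ℝ) < 1 - β := by linarith
  have hlam0 : 0 ≤ lam := div_nonneg (by linarith) h1α.le
  have hlamB : 1 - lam = (1 - β) / (1 - α) := by rw [hlam]; field_simp; ring
  have hlamC : (0:ℝ) < 1 - lam := by rw [hlamB]; positivity
  set Wα := W dfun (lazyWalk G α x) (lazyWalk G α y) with hWα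
  set Wβ := W dfun (lazyWalk G β x) (lazyWalk G β y) with hWβ
  have hmxβ : IsProbMeasure (lazyWalk G β x) := lazyWalk_isProb G (by linarith) hβ1.le (hdeg x)
  have hmyβ : IsProbMeasure (lazyWalk G β y) := lazyWalk_isProb G (by linarith) hβ1.le (hdeg y)
  have hmxα : IsProbMeasure (lazyWalk G α x) := lazyWalk_isProb G hα0.le hα1.le (hdeg x)
  have hmyα : IsProbMeasure (lazyWalk G α y) := lazyWalk_isProb G hα0.le hα1.le (hdeg y)
  -- key: Wβ ≤ lam * D + (1 - lam) * Wα
  have hWle : Wβ ≤ lam * D + (1 - lam) * Wα := by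
    have main : ∀ A, IsCoupling A (lazyWalk G α x) (lazyWalk G α y) →
        Wβ ≤ lam * D + (1 - lam) * ∑ p : V × V, A p * dfun p.1 p.2 := by
      intro A hA
      set B : V × V → ℝ := fun p => lam * (if p = (x, y) then 1 else 0) + (1 - lam) * A p
        with hB
      have hBc : IsCoupling B (lazyWalk G β x) (lazyWalk G β y) := by
        refine ⟨fun p => ?_, fun x' => ?_, fun y' => ?_⟩
        · have : (0:ℝ) ≤ (if p = (x, y) then (1:ℝ) else 0) := by split <;> norm_num
          have := mul_nonneg hlam0 this
          have := mul_nonneg hlamC.le (hA.1 p)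
          simp only [hB]; positivity
        · simp only [hB]
          rw [Finset.sum_add_distrib, ← Finset.mul_sum, ← Finset.mul_sum, hA.2.1,
            lazyWalk_decomp G hα1 hαβ x x']
          congr 2
          have : ∀ y', (if ((x' : V), y') = (x, y) then (1:ℝ) else 0)
              = if x' = x then (if y' = y then (1:ℝ) else 0) else 0 := by
            intro y'
            by_cases h1 : x' = x <;> by_cases h2 : y' = y <;> simp [Prod.ext_iff, h1, h2]
          rw [Finset.sum_congr rfl fun y' _ => this y']
          by_cases h1 : x' = x
          · simp [h1]
          · simp [h1]
        · simp only [hB]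
          rw [Finset.sum_add_distrib, ← Finset.mul_sum, ← Finset.mul_sum, hA.2.2,
            lazyWalk_decomp G hα1 hαβ y y']
          congr 2
          have : ∀ x', (if ((x' : V), y') = (x, y) then (1:ℝ) else 0)
              = if y' = y then (if x' = x then (1:ℝ) else 0) else 0 := by
            intro x'
            by_cases h1 : x' = x <;> by_cases h2 : y' = y <;> simp [Prod.ext_iff, h1, h2]
          rw [Finset.sum_congr rfl fun x' _ => this x']
          by_cases h1 : y' = y
          · simp [h1]
          · simp [h1]
      refine le_trans (W_le_cost hd0 hBc) (le_of_eq ?_)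
      simp only [hB]
      have : ∀ p : V × V, (lam * (if p = (x, y) then (1:ℝ) else 0) + (1 - lam) * A p)
          * dfun p.1 p.2
          = lam * ((if p = (x, y) then dfun p.1 p.2 else 0)) + (1 - lam) * (A p * dfun p.1 p.2) := by
        intro p
        by_cases h : p = (x, y) <;> simp [h] <;> ring
      rw [Finset.sum_congr rfl fun p _ => this p, Finset.sum_add_distrib, ← Finset.mul_sum,
        ← Finset.mul_sum]
      congr 2
      rw [Finset.sum_ite_eq' Finset.univ ((x, y) : V × V) (fun p => dfun p.1 p.2)]
      simp [hD, hdfun]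
    have : (Wβ - lam * D) / (1 - lam) ≤ Wα := by
      refine le_W hmxα hmyα fun A hA => ?_
      rw [div_le_iff₀ hlamC]
      have := main A hA
      linarith [main A hA]
    rw [div_le_iff₀ hlamC] at this
    linarith
  have hWαnn : 0 ≤ Wα := by
    refine le_csInf (WSet_nonempty hmxα hmyα dfun) ?_
    rintro c ⟨A, hA, rfl⟩
    exact Finset.sum_nonneg fun p _ => mul_nonneg (hA.1 p) (hd0 _ _)
  -- conclude
  have h2 : (1 - α) * Wβ ≤ (β - α) * D + (1 - β) * Wα := by
    have h3 := mul_le_mul_of_nonneg_left hWle h1α.le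
    have h4 : (1 - α) * (lam * D + (1 - lam) * Wα) = (β - α) * D + (1 - β) * Wα := by
      rw [hlamB, hlam]
      field_simp
    linarith [h4 ▸ h3]
  show kappaAlpha G α x y / (1 - α) ≤ kappaAlpha G β x y / (1 - β)
  unfold kappaAlpha
  rw [div_le_div_iff₀ h1α h1β]
  have e1 : (1:ℝ) - Wα / D = (D - Wα) / D := by field_simp
  have e2 : (1:ℝ) - Wβ / D = (D - Wβ) / D := by field_simp
  rw [← hdfun, ← hD, ← hWα, ← hWβ, e1, e2, div_mul_eq_mul_div, div_mul_eq_mul_div,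
    div_le_div_iff₀ hD0 hD0]
  nlinarith [h2, hD0]

lemma kappa_tendsto (hG : G.Connected) (hdeg : ∀ v, 0 < G.degree v) {x y : V} (hxy : x ≠ y) :
    Filter.Tendsto (fun α => kappaAlpha G α x y / (1 - α)) (nhdsWithin 1 (Set.Ico (0:ℝ) 1))
      (nhds (kappaLLY G x y)) := by
  have hbdd : BddAbove ((fun α => kappaAlpha G α x y / (1 - α)) '' Set.Ioo (0:ℝ) 1) := by
    refine ⟨2, ?_⟩
    rintro r ⟨α, ⟨hα0, hα1⟩, rfl⟩
    exact kappa_div_le_two G hG hdeg hxy hα0.le hα1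
  have h := (kappa_div_monotoneOn G hG hdeg hxy).tendsto_nhdsWithin_Ioo_left
    (by exact ⟨1/2, by norm_num⟩) hbdd
  rw [← nhdsWithin_Ico_eq_nhdsLT (zero_lt_one (α := ℝ))] at h
  haveI : (nhdsWithin (1:ℝ) (Set.Ico (0:ℝ) 1)).NeBot := by
    rw [nhdsWithin_Ico_eq_nhdsLT (zero_lt_one (α := ℝ))]
    infer_instance
  have heq : kappaLLY G x y
      = sSup ((fun α => kappaAlpha G α x y / (1 - α)) '' Set.Ioo (0:ℝ) 1) := by
    unfold kappaLLY
    exact h.limUnder_eq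
  rw [heq]
  exact h

end Mono

section Chain
variable {V : Type*} [Fintype V] [DecidableEq V] (G : SimpleGraph V) [DecidableRel G.Adj]

lemma kappa_chain (hG : G.Connected) (hdeg : ∀ v, 0 < G.degree v) {k : ℕ} (hk : 1 ≤ k)
    {p : ℕ → V} (hdist : G.dist (p 0) (p k) = k) (hadj : ∀ i < k, G.Adj (p i) (p (i + 1)))
    {α : ℝ} (hα0 : 0 ≤ α) (hα1 : α < 1) :
    (∑ i ∈ Finset.range k, kappaAlpha G α (p i) (p (i + 1))) / (k : ℝ)
      ≤ kappaAlpha G α (p 0) (p k) := by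
  have hd0 : ∀ a b : V, 0 ≤ (G.dist a b : ℝ) := fun a b => Nat.cast_nonneg _
  have htri : ∀ a b c : V, (G.dist a c : ℝ) ≤ (G.dist a b : ℝ) + (G.dist b c : ℝ) :=
    fun a b c => by exact_mod_cast hG.dist_triangle
  have hdd : ∀ a : V, (G.dist a a : ℝ) = 0 := fun a => by simp
  have hprob : ∀ v, IsProbMeasure (lazyWalk G α v) := fun v =>
    lazyWalk_isProb G hα0 hα1.le (hdeg v)
  have hWt : ∀ j, j ≤ k → W (fun a b => (G.dist a b : ℝ)) (lazyWalk G α (p 0)) (lazyWalk G α (p j))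
      ≤ ∑ i ∈ Finset.range j,
          W (fun a b => (G.dist a b : ℝ)) (lazyWalk G α (p i)) (lazyWalk G α (p (i + 1))) := by
    intro j
    induction j with
    | zero =>
      intro _
      simpa using W_self_nonpos hd0 hdd (hprob (p 0))
    | succ n ih =>
      intro hn
      have h1 := ih (by omega)
      have h2 := W_triangle hd0 htri (hprob (p 0)) (hprob (p n)) (hprob (p (n + 1)))
      rw [Finset.sum_range_succ]
      linarith
  have hk0 : (0:ℝ) < (k : ℝ) := by exact_mod_cast hk
  have hκ0k : kappaAlpha G α (p 0) (p k)
      = 1 - W (fun a b => (G.dist a b : ℝ)) (lazyWalk G α (p 0)) (lazyWalk G α (p k)) / (k : ℝ) := by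
    unfold kappaAlpha
    rw [hdist]
  have hκi : ∀ i < k, kappaAlpha G α (p i) (p (i + 1))
      = 1 - W (fun a b => (G.dist a b : ℝ)) (lazyWalk G α (p i)) (lazyWalk G α (p (i + 1))) := by
    intro i hi
    unfold kappaAlpha
    rw [SimpleGraph.dist_eq_one_iff_adj.mpr (hadj i hi)]
    simp
  have hsum : ∑ i ∈ Finset.range k, kappaAlpha G α (p i) (p (i + 1))
      = (k : ℝ) - ∑ i ∈ Finset.range k,
          W (fun a b => (G.dist a b : ℝ)) (lazyWalk G α (p i)) (lazyWalk G α (p (i + 1))) := by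
    rw [Finset.sum_congr rfl (fun i hi => hκi i (Finset.mem_range.mp hi)),
      Finset.sum_sub_distrib]
    simp
  rw [hsum, hκ0k, div_le_iff₀ hk0]
  have he : (1 - W (fun a b => (G.dist a b : ℝ)) (lazyWalk G α (p 0)) (lazyWalk G α (p k)) / (k : ℝ))
      * (k : ℝ)
      = (k : ℝ) - W (fun a b => (G.dist a b : ℝ)) (lazyWalk G α (p 0)) (lazyWalk G α (p k)) := by
    field_simp
  rw [he]
  have := hWt k le_rfl
  linarith

lemma IAlpha_tendsto (hG : G.Connected) (hdeg : ∀ v, 0 < G.degree v) (κ₀ : ℝ) :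
    Filter.Tendsto (fun α => IAlpha G α κ₀ / (1 - α)) (nhdsWithin 1 (Set.Ico (0:ℝ) 1))
      (nhds (ILLY G κ₀)) := by
  have h : ∀ e ∈ G.edgeFinset, Filter.Tendsto (fun α =>
      Sym2.lift ⟨fun x y => max 0 ((1 - α) * κ₀ - kappaAlpha G α x y),
        fun x y => by simp only []; rw [kappaAlpha_symm]⟩ e / (1 - α))
      (nhdsWithin 1 (Set.Ico (0:ℝ) 1))
      (nhds (Sym2.lift ⟨fun x y => max 0 (κ₀ - kappaLLY G x y),
        fun x y => by simp only []; rw [kappaLLY_symm]⟩ e)) := by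
    intro e he
    induction e using Sym2.ind with
    | _ a b =>
      rw [SimpleGraph.mem_edgeFinset, SimpleGraph.mem_edgeSet] at he
      have hab : a ≠ b := he.ne
      simp only [Sym2.lift_mk]
      have hT := kappa_tendsto G hG hdeg hab
      have hT2 : Filter.Tendsto (fun α => max 0 (κ₀ - kappaAlpha G α a b / (1 - α)))
          (nhdsWithin 1 (Set.Ico (0:ℝ) 1)) (nhds (max 0 (κ₀ - kappaLLY G a b))) :=
        Filter.Tendsto.max tendsto_const_nhds (Filter.Tendsto.const_sub κ₀ hT)
      refine Filter.Tendsto.congr' ?_ hT2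
      filter_upwards [self_mem_nhdsWithin] with α hα
      obtain ⟨hα0, hα1⟩ := hα
      have h1α : (0:ℝ) < 1 - α := by linarith
      rw [← max_div_div_right h1α.le, zero_div]
      congr 1
      field_simp
  have hsum := tendsto_finset_sum G.edgeFinset h
  unfold ILLY
  refine Filter.Tendsto.congr (fun α => ?_) hsum
  unfold IAlpha
  rw [Finset.sum_div]

end Chain

/-- Key lemma for the Lin–Lu–Yau curvature: along a geodesic `x₀, …, x_k`,
`κ_LLY(x₀,x_k) ≥ (∑ κ_LLY(x_{i-1},x_i))/k ≥ κ₀ - I_{κ₀}/k`. -/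
theorem stmt_19 {V : Type*} [Fintype V] [DecidableEq V] (G : SimpleGraph V)
    [DecidableRel G.Adj] (hG : G.Connected) (κ₀ : ℝ) (k : ℕ) (hk : 1 ≤ k) (p : ℕ → V)
    (hdist : G.dist (p 0) (p k) = k)
    (hadj : ∀ i < k, G.Adj (p i) (p (i + 1))) :
    kappaLLY G (p 0) (p k) ≥ (∑ i ∈ Finset.range k, kappaLLY G (p i) (p (i + 1))) / k ∧
    (∑ i ∈ Finset.range k, kappaLLY G (p i) (p (i + 1))) / k ≥ κ₀ - ILLY G κ₀ / k := by
  have hne01 : p 0 ≠ p k := by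
    intro h
    rw [h, SimpleGraph.dist_self] at hdist
    omega
  have hdeg : ∀ v, 0 < G.degree v := by
    intro v
    rw [SimpleGraph.degree_pos_iff_exists_adj]
    have : Nontrivial V := ⟨p 0, p 1, (hadj 0 hk).ne⟩
    obtain ⟨u, hu⟩ := exists_ne v
    obtain ⟨w⟩ := hG.preconnected v u
    cases w with
    | nil => exact absurd rfl hu.symm
    | cons h q => exact ⟨_, h⟩
  haveI : (nhdsWithin (1:ℝ) (Set.Ico (0:ℝ) 1)).NeBot := by
    rw [nhdsWithin_Ico_eq_nhdsLT (zero_lt_one (α := ℝ))]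
    infer_instance
  have hk0 : (0:ℝ) < (k : ℝ) := by exact_mod_cast hk
  -- injectivity of vertices along the geodesic
  have hdle : ∀ a j, a + j ≤ k → G.dist (p a) (p (a + j)) ≤ j := by
    intro a j
    induction j with
    | zero => intro _; simp [SimpleGraph.dist_self]
    | succ n ih =>
      intro h
      have h1 := ih (by omega)
      have h2 : G.dist (p (a + n)) (p (a + n + 1)) = 1 :=
        SimpleGraph.dist_eq_one_iff_adj.mpr (hadj (a + n) (by omega))
      have h3 := hG.dist_triangle (u := p a) (v := p (a + n)) (w := p (a + n + 1))
      have h4 : a + (n + 1) = a + n + 1 := by omega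
      rw [h4]
      omega
  have hvinj : ∀ i j, i ≤ j → j ≤ k → p i = p j → i = j := by
    intro i j hij hjk he
    by_contra hne
    have hij' : i < j := by omega
    have h1 : G.dist (p 0) (p i) ≤ i := by simpa using hdle 0 i (by omega)
    have h2 : G.dist (p j) (p k) ≤ k - j := by
      have := hdle j (k - j) (by omega)
      rw [show j + (k - j) = k from by omega] at this
      exact this
    have h3 := hG.dist_triangle (u := p 0) (v := p i) (w := p k)
    rw [hdist] at h3
    rw [he] at h1 h3
    omega
  have hedge_inj : ∀ i ∈ Finset.range k, ∀ j ∈ Finset.range k,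
      s(p i, p (i + 1)) = s(p j, p (j + 1)) → i = j := by
    intro i hi j hj he
    rw [Finset.mem_range] at hi hj
    rw [Sym2.eq_iff] at he
    rcases he with ⟨h1, h2⟩ | ⟨h1, h2⟩
    · rcases le_total i j with h | h
      · exact hvinj i j h (by omega) h1
      · exact (hvinj j i h (by omega) h1.symm).symm
    · rcases le_total i (j + 1) with h | h
      · have ha := hvinj i (j + 1) h (by omega) h1
        rcases le_total (i + 1) j with h' | h'
        · have hb := hvinj (i + 1) j h' (by omega) h2
          omega
        · have hb := hvinj j (i + 1) h' (by omega) h2.symm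
          omega
      · have ha := hvinj (j + 1) i h (by omega) h1.symm
        have hb := hvinj j (i + 1) (by omega) (by omega) h2.symm
        omega
  -- the path-sum of max-terms is at most IAlpha
  have hmaxle : ∀ α : ℝ,
      ∑ i ∈ Finset.range k, max 0 ((1 - α) * κ₀ - kappaAlpha G α (p i) (p (i + 1)))
        ≤ IAlpha G α κ₀ := by
    intro α
    unfold IAlpha
    set g : Sym2 V → ℝ := Sym2.lift ⟨fun x y => max 0 ((1 - α) * κ₀ - kappaAlpha G α x y),
      fun x y => by simp only []; rw [kappaAlpha_symm]⟩ with hg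
    have h1 : ∀ i ∈ Finset.range k,
        max 0 ((1 - α) * κ₀ - kappaAlpha G α (p i) (p (i + 1))) = g s(p i, p (i + 1)) := by
      intro i _
      rw [hg, Sym2.lift_mk]
    rw [Finset.sum_congr rfl h1,
      ← Finset.sum_image (f := g) (g := fun i => s(p i, p (i + 1))) hedge_inj]
    refine Finset.sum_le_sum_of_subset_of_nonneg ?_ ?_
    · intro e he
      rw [Finset.mem_image] at he
      obtain ⟨i, hi, rfl⟩ := he
      rw [SimpleGraph.mem_edgeFinset, SimpleGraph.mem_edgeSet]
      exact hadj i (Finset.mem_range.mp hi)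
    · intro e _ _
      induction e using Sym2.ind with
      | _ a b =>
        rw [hg, Sym2.lift_mk]
        exact le_max_left _ _
  have hIneq : ∀ α : ℝ, (k : ℝ) * ((1 - α) * κ₀) - IAlpha G α κ₀
      ≤ ∑ i ∈ Finset.range k, kappaAlpha G α (p i) (p (i + 1)) := by
    intro α
    have h1 : ∀ i ∈ Finset.range k,
        (1 - α) * κ₀ - max 0 ((1 - α) * κ₀ - kappaAlpha G α (p i) (p (i + 1)))
          ≤ kappaAlpha G α (p i) (p (i + 1)) := by
      intro i _
      have := le_max_right (0:ℝ) ((1 - α) * κ₀ - kappaAlpha G α (p i) (p (i + 1)))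
      linarith
    have h2 := Finset.sum_le_sum h1
    rw [Finset.sum_sub_distrib, Finset.sum_const, Finset.card_range, nsmul_eq_mul] at h2
    have h3 := hmaxle α
    linarith
  -- limits
  have hF1 : Filter.Tendsto
      (fun α => (∑ i ∈ Finset.range k, kappaAlpha G α (p i) (p (i + 1))) / (1 - α) / (k : ℝ))
      (nhdsWithin 1 (Set.Ico (0:ℝ) 1))
      (nhds ((∑ i ∈ Finset.range k, kappaLLY G (p i) (p (i + 1))) / (k : ℝ))) := by
    have := Filter.Tendsto.div_const (tendsto_finset_sum (Finset.range k)
      (fun i hi => kappa_tendsto G hG hdeg (hadj i (Finset.mem_range.mp hi)).ne)) (k : ℝ)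
    refine Filter.Tendsto.congr (fun α => ?_) this
    congr 1
    rw [Finset.sum_div]
  have hF2 : Filter.Tendsto (fun α => kappaAlpha G α (p 0) (p k) / (1 - α))
      (nhdsWithin 1 (Set.Ico (0:ℝ) 1)) (nhds (kappaLLY G (p 0) (p k))) :=
    kappa_tendsto G hG hdeg hne01
  have hFI : Filter.Tendsto (fun α => κ₀ - IAlpha G α κ₀ / (1 - α) / (k : ℝ))
      (nhdsWithin 1 (Set.Ico (0:ℝ) 1)) (nhds (κ₀ - ILLY G κ₀ / (k : ℝ))) :=
    Filter.Tendsto.const_sub κ₀ ((IAlpha_tendsto G hG hdeg κ₀).div_const (k : ℝ))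
  constructor
  · refine ge_iff_le.mpr (le_of_tendsto_of_tendsto hF1 hF2 ?_)
    filter_upwards [self_mem_nhdsWithin] with α hα
    obtain ⟨hα0, hα1⟩ := hα
    have h1α : (0:ℝ) < 1 - α := by linarith
    have hc := kappa_chain G hG hdeg hk hdist hadj hα0 hα1
    rw [div_right_comm]
    exact div_le_div_of_nonneg_right hc h1α.le
  · refine ge_iff_le.mpr (le_of_tendsto_of_tendsto hFI hF1 ?_)
    filter_upwards [self_mem_nhdsWithin] with α hα
    obtain ⟨hα0, hα1⟩ := hα
    have h1α : (0:ℝ) < 1 - α := by linarith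
    have hc : (0:ℝ) < (1 - α) * (k : ℝ) := by positivity
    rw [div_div, div_div, sub_le_iff_le_add, ← add_div, le_div_iff₀ hc]
    have he : κ₀ * ((1 - α) * (k : ℝ)) = (k : ℝ) * ((1 - α) * κ₀) := by ring
    rw [he]
    linarith [hIneq α]
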